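/- Probability that one Laplace variable exceeds another: let ε > 0, and let X ~ Lap(ε/2, 0) and X₂ ~ Lap(ε/4, 1) be independent with densities (ε/4)e^{-(ε/2)|x|} and (ε/8)e^{-(ε/4)|x-1|}. Then Prob(X₂ ≥ X) is a pseudo-rational function of ε, namely an explicit ratio of finite sums of terms c·ε^n·e^{qε}, computable by the iterated integral ∫∫_{x₂ ≥ x} f_X(x)f_{X₂}(x₂) dx₂ dx. -/

import Mathlib

open MeasureTheory

section Helpers

open Set

lemma int_exp_Ioi' {b : ℝ} (hb : 0 < b) (c : ℝ) :
    ∫ x in Ioi c, Real.exp (-(b * x)) = Real.exp (-(b * c)) / b := by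
  have h := integral_comp_mul_left_Ioi (fun x => Real.exp (-x)) c hb
  simp only [smul_eq_mul] at h
  rw [h, integral_exp_neg_Ioi]
  field_simp

lemma int_exp_Iic' {b : ℝ} (hb : 0 < b) (c : ℝ) :
    ∫ x in Iic c, Real.exp (b * x) = Real.exp (b * c) / b := by
  have h := integral_comp_neg_Iic c (fun x => Real.exp (-(b * x)))
  simp only [mul_neg, neg_neg] at h
  rw [h, int_exp_Ioi' hb, mul_neg, neg_neg]

lemma int_exp_Ioc' {a : ℝ} (ha : a ≠ 0) {u v : ℝ} (huv : u ≤ v) :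
    ∫ x in Ioc u v, Real.exp (a * x) = (Real.exp (a * v) - Real.exp (a * u)) / a := by
  rw [← intervalIntegral.integral_of_le huv,
    intervalIntegral.integral_comp_mul_left (fun x => Real.exp x) ha, integral_exp,
    smul_eq_mul]
  field_simp

lemma intOn_exp_Iic' {b : ℝ} (hb : 0 < b) (c : ℝ) :
    IntegrableOn (fun x => Real.exp (b * x)) (Iic c) := by
  rw [integrableOn_Iic_iff_integrableOn_Iio]
  have h : Integrable ((Ioi (-c)).indicator (fun x => Real.exp (-(b * x)))) volume := by
    rw [integrable_indicator_iff measurableSet_Ioi]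
    have h0 := exp_neg_integrableOn_Ioi (-c) hb
    simpa only [neg_mul] using h0
  have h2 := h.comp_neg
  have h3 : (fun x => ((Ioi (-c)).indicator (fun y => Real.exp (-(b * y)))) (-x))
      = (Iio c).indicator (fun x => Real.exp (b * x)) := by
    funext x
    by_cases hx : x < c
    · rw [Set.indicator_of_mem (by simpa using hx),
        Set.indicator_of_mem (show x ∈ Iio c from hx)]
      simp
    · rw [Set.indicator_of_notMem (by simpa using hx),
        Set.indicator_of_notMem (show x ∉ Iio c from hx)]
  rw [h3] at h2
  exact (integrable_indicator_iff measurableSet_Iio).1 h2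

noncomputable def Gf (ε x : ℝ) : ℝ :=
  if x ≤ 1 then 1 - Real.exp (ε / 4 * (x - 1)) / 2 else Real.exp (-(ε / 4 * (x - 1))) / 2

lemma inner_eq {ε : ℝ} (hε : 0 < ε) (x : ℝ) :
    ∫ x₂ in Ici x, (ε / 8) * Real.exp (-(ε / 4) * |x₂ - 1|) = Gf ε x := by
  have hb : 0 < ε / 4 := by positivity
  have hne : ε ≠ 0 := ne_of_gt hε
  have key1 : ∀ y : ℝ, 1 ≤ y → (∫ x₂ in Ioi y, (ε / 8) * Real.exp (-(ε / 4) * |x₂ - 1|))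
      = Real.exp (-(ε / 4 * (y - 1))) / 2 := by
    intro y hy
    have hcg : EqOn (fun x₂ => (ε / 8) * Real.exp (-(ε / 4) * |x₂ - 1|))
        (fun x₂ => (ε / 8 * Real.exp (ε / 4)) * Real.exp (-(ε / 4 * x₂))) (Ioi y) := by
      intro x₂ hx₂
      simp only [mem_Ioi] at hx₂
      dsimp only
      rw [abs_of_nonneg (by linarith : (0:ℝ) ≤ x₂ - 1)]
      have h1 : -(ε / 4) * (x₂ - 1) = ε / 4 + -(ε / 4 * x₂) := by ring
      rw [h1, Real.exp_add, ← mul_assoc]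
    rw [setIntegral_congr_fun measurableSet_Ioi hcg, integral_const_mul _ _, int_exp_Ioi' hb]
    have h2 : -(ε / 4 * (y - 1)) = ε / 4 + -(ε / 4 * y) := by ring
    rw [h2, Real.exp_add]
    field_simp
    ring
  rw [integral_Ici_eq_integral_Ioi]
  by_cases hx : x ≤ 1
  · have hcont : Continuous fun x₂ : ℝ => (ε / 8) * Real.exp (-(ε / 4) * |x₂ - 1|) := by
      fun_prop
    have hint1 : IntegrableOn (fun x₂ : ℝ => (ε / 8) * Real.exp (-(ε / 4) * |x₂ - 1|))
        (Ioc x 1) := hcont.integrableOn_Ioc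
    have hint2 : IntegrableOn (fun x₂ : ℝ => (ε / 8) * Real.exp (-(ε / 4) * |x₂ - 1|))
        (Ioi 1) := by
      have h0 : IntegrableOn (fun x₂ : ℝ => ε / 8 * Real.exp (ε / 4) * Real.exp (-(ε / 4) * x₂))
          (Ioi 1) := (exp_neg_integrableOn_Ioi 1 hb).const_mul (ε / 8 * Real.exp (ε / 4))
      refine IntegrableOn.congr_fun h0 ?_ measurableSet_Ioi
      intro x₂ hx₂
      simp only [mem_Ioi] at hx₂
      dsimp only
      rw [abs_of_nonneg (by linarith : (0:ℝ) ≤ x₂ - 1)]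
      have h1 : -(ε / 4) * (x₂ - 1) = ε / 4 + -(ε / 4) * x₂ := by ring
      rw [h1, Real.exp_add, ← mul_assoc]
    rw [show Ioi x = Ioc x 1 ∪ Ioi 1 from (Ioc_union_Ioi_eq_Ioi hx).symm,
      setIntegral_union (Ioc_disjoint_Ioi le_rfl) measurableSet_Ioi hint1 hint2,
      key1 1 le_rfl]
    have hcg2 : EqOn (fun x₂ => (ε / 8) * Real.exp (-(ε / 4) * |x₂ - 1|))
        (fun x₂ => (ε / 8 * Real.exp (-(ε / 4))) * Real.exp (ε / 4 * x₂)) (Ioc x 1) := by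
      intro x₂ hx₂
      simp only [mem_Ioc] at hx₂
      dsimp only
      rw [abs_of_nonpos (by linarith : x₂ - 1 ≤ (0:ℝ))]
      have h1 : -(ε / 4) * -(x₂ - 1) = -(ε / 4) + ε / 4 * x₂ := by ring
      rw [h1, Real.exp_add, ← mul_assoc]
    rw [setIntegral_congr_fun measurableSet_Ioc hcg2, integral_const_mul _ _,
      int_exp_Ioc' (by positivity : ε / 4 ≠ 0) hx]
    rw [Gf, if_pos hx]
    have hE1 : Real.exp (ε / 4 * (x - 1)) = Real.exp (ε / 4 * x) * Real.exp (-(ε / 4)) := by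
      rw [← Real.exp_add]; ring_nf
    have hE2 : Real.exp (-(ε / 4)) * Real.exp (ε / 4) = 1 := by
      rw [← Real.exp_add, show -(ε / 4) + ε / 4 = 0 by ring, Real.exp_zero]
    rw [hE1, show ε / 4 * (1 - 1) = 0 by ring, neg_zero, Real.exp_zero,
      show ε / 4 * 1 = ε / 4 by ring]
    have hE2' : Real.exp (-ε / 4) * Real.exp (ε / 4) = 1 := by
      rw [← Real.exp_add, show -ε / 4 + ε / 4 = 0 by ring, Real.exp_zero]
    field_simp
    linear_combination 8 * hE2
  · rw [key1 x (le_of_lt (not_le.1 hx)), Gf, if_neg hx]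

end Helpers

/-- A pseudo-polynomial in ε: a finite sum `Σᵢ aᵢ · ε^{nᵢ} · e^{ε·qᵢ}` with
rational coefficients `aᵢ`, natural exponents `nᵢ`, and nonnegative rational `qᵢ`. -/
def IsPseudoPoly (f : ℝ → ℝ) : Prop :=
  ∃ (m : ℕ) (a : Fin m → ℚ) (n : Fin m → ℕ) (q : Fin m → ℚ),
    (∀ i, 0 ≤ q i) ∧
    ∀ ε : ℝ, f ε = ∑ i : Fin m, (a i : ℝ) * ε ^ (n i) * Real.exp (ε * (q i : ℝ))

/-- For independent `X ~ Lap(ε/2, 0)` and `X₂ ~ Lap(ε/4, 1)`, the probability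
`Prob(X₂ ≥ X)`, computed by the iterated integral of the joint density over
`{x₂ ≥ x}`, is a pseudo-rational function of ε. -/
theorem prob_laplace_exceeds_is_pseudo_rational :
    ∃ p q : ℝ → ℝ, IsPseudoPoly p ∧ IsPseudoPoly q ∧
      (∀ ε : ℝ, 0 < ε → q ε ≠ 0) ∧
      ∀ ε : ℝ, 0 < ε →
        (∫ x : ℝ, (∫ x₂ in Set.Ici x, (ε / 8) * Real.exp (-(ε / 4) * |x₂ - 1|)) *
            ((ε / 4) * Real.exp (-(ε / 2) * |x|))) = p ε / q ε := by
  classical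
  refine ⟨fun ε => 6 * Real.exp (ε * (1/2)) - 4 * Real.exp (ε * (1/4)) + 1,
    fun ε => 6 * Real.exp (ε * (1/2)), ?_, ?_, ?_, ?_⟩
  · refine ⟨3, ![6, -4, 1], ![0, 0, 0], ![1/2, 1/4, 0], ?_, ?_⟩
    · intro i; fin_cases i <;> norm_num
    · intro ε
      simp [Fin.sum_univ_three]
      push_cast
      ring
  · refine ⟨1, ![6], ![0], ![1/2], ?_, ?_⟩
    · intro i; fin_cases i <;> norm_num
    · intro ε
      simp [Fin.sum_univ_one]
  · intro ε hε
    positivity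
  · intro ε hε
    have hne : ε ≠ 0 := ne_of_gt hε
    have h0 : (∫ x : ℝ, (∫ x₂ in Set.Ici x, (ε / 8) * Real.exp (-(ε / 4) * |x₂ - 1|)) *
          ((ε / 4) * Real.exp (-(ε / 2) * |x|)))
        = ∫ x : ℝ, Gf ε x * ((ε / 4) * Real.exp (-(ε / 2) * |x|)) := by
      congr 1
      funext x
      rw [inner_eq hε]
    rw [h0]
    set F : ℝ → ℝ := fun x => Gf ε x * ((ε / 4) * Real.exp (-(ε / 2) * |x|)) with hF
    -- region A : Iic 0
    have hEqA : Set.EqOn F (fun x => (ε / 4) * Real.exp (ε / 2 * x)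
        - (ε / 8 * Real.exp (-(ε / 4))) * Real.exp (3 * ε / 4 * x)) (Set.Iic 0) := by
      intro x hx
      simp only [Set.mem_Iic] at hx
      have h1 : Real.exp (ε / 4 * (x - 1)) * Real.exp (ε / 2 * x)
          = Real.exp (-(ε / 4)) * Real.exp (3 * ε / 4 * x) := by
        rw [← Real.exp_add, ← Real.exp_add]; ring_nf
      simp only [hF, Gf]
      rw [if_pos (by linarith : x ≤ 1), abs_of_nonpos hx,
        show -(ε / 2) * -x = ε / 2 * x by ring]
      linear_combination (-(ε / 8)) * h1
    have hIA1 : IntegrableOn (fun x : ℝ => (ε / 4) * Real.exp (ε / 2 * x)) (Set.Iic 0) :=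
      (intOn_exp_Iic' (by positivity) 0).const_mul _
    have hIA2 : IntegrableOn
        (fun x : ℝ => (ε / 8 * Real.exp (-(ε / 4))) * Real.exp (3 * ε / 4 * x)) (Set.Iic 0) :=
      (intOn_exp_Iic' (by positivity) 0).const_mul _
    have hintA : IntegrableOn F (Set.Iic 0) :=
      IntegrableOn.congr_fun (hIA1.sub hIA2) hEqA.symm measurableSet_Iic
    have hA : ∫ x in Set.Iic 0, F x = 1/2 - Real.exp (-(ε / 4)) / 6 := by
      rw [setIntegral_congr_fun measurableSet_Iic hEqA, integral_sub hIA1 hIA2,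
        integral_const_mul _ _, integral_const_mul _ _,
        int_exp_Iic' (by positivity : (0:ℝ) < ε / 2) 0,
        int_exp_Iic' (by positivity : (0:ℝ) < 3 * ε / 4) 0,
        show ε / 2 * 0 = 0 by ring, show 3 * ε / 4 * 0 = 0 by ring, Real.exp_zero]
      field_simp
      ring
    -- region B : Ioc 0 1
    have hEqB : Set.EqOn F (fun x => (ε / 4) * Real.exp (-(ε / 2) * x)
        - (ε / 8 * Real.exp (-(ε / 4))) * Real.exp (-(ε / 4) * x)) (Set.Ioc 0 1) := by
      intro x hx
      simp only [Set.mem_Ioc] at hx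
      have h1 : Real.exp (ε / 4 * (x - 1)) * Real.exp (-(ε / 2) * x)
          = Real.exp (-(ε / 4)) * Real.exp (-(ε / 4) * x) := by
        rw [← Real.exp_add, ← Real.exp_add]; ring_nf
      simp only [hF, Gf]
      rw [if_pos hx.2, abs_of_pos hx.1]
      linear_combination (-(ε / 8)) * h1
    have hIB1 : IntegrableOn (fun x : ℝ => (ε / 4) * Real.exp (-(ε / 2) * x))
        (Set.Ioc (0:ℝ) 1) := (Continuous.integrableOn_Ioc (by fun_prop))
    have hIB2 : IntegrableOn
        (fun x : ℝ => (ε / 8 * Real.exp (-(ε / 4))) * Real.exp (-(ε / 4) * x))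
        (Set.Ioc (0:ℝ) 1) := (Continuous.integrableOn_Ioc (by fun_prop))
    have hintB : IntegrableOn F (Set.Ioc 0 1) :=
      IntegrableOn.congr_fun (hIB1.sub hIB2) hEqB.symm measurableSet_Ioc
    have hB : ∫ x in Set.Ioc (0:ℝ) 1, F x = 1/2 - Real.exp (-(ε / 4)) / 2 := by
      rw [setIntegral_congr_fun measurableSet_Ioc hEqB, integral_sub hIB1 hIB2,
        integral_const_mul _ _, integral_const_mul _ _,
        int_exp_Ioc' (show -(ε / 2) ≠ 0 from neg_ne_zero.2 (by positivity)) (zero_le_one),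
        int_exp_Ioc' (show -(ε / 4) ≠ 0 from neg_ne_zero.2 (by positivity)) (zero_le_one),
        show -(ε / 2) * 1 = -(ε / 2) by ring, show -(ε / 2) * 0 = 0 by ring,
        show -(ε / 4) * 1 = -(ε / 4) by ring, show -(ε / 4) * 0 = 0 by ring, Real.exp_zero]
      have hEE : Real.exp (-(ε / 4)) * Real.exp (-(ε / 4)) = Real.exp (-(ε / 2)) := by
        rw [← Real.exp_add]; ring_nf
      have hEE' : Real.exp (-ε / 4) * Real.exp (-ε / 4) = Real.exp (-ε / 2) := by
        rw [← Real.exp_add]; ring_nf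
      field_simp
      linear_combination 32 * hEE
    -- region C : Ioi 1
    have hEqC : Set.EqOn F (fun x => (ε / 8 * Real.exp (ε / 4)) * Real.exp (-(3 * ε / 4) * x))
        (Set.Ioi 1) := by
      intro x hx
      simp only [Set.mem_Ioi] at hx
      have h1 : Real.exp (-(ε / 4 * (x - 1))) * Real.exp (-(ε / 2) * x)
          = Real.exp (ε / 4) * Real.exp (-(3 * ε / 4) * x) := by
        rw [← Real.exp_add, ← Real.exp_add]; ring_nf
      simp only [hF, Gf]
      rw [if_neg (by linarith : ¬ x ≤ 1), abs_of_pos (by linarith : (0:ℝ) < x)]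
      linear_combination (ε / 8) * h1
    have hIC : IntegrableOn (fun x : ℝ => (ε / 8 * Real.exp (ε / 4))
        * Real.exp (-(3 * ε / 4) * x)) (Set.Ioi 1) :=
      (exp_neg_integrableOn_Ioi 1 (by positivity : (0:ℝ) < 3 * ε / 4)).const_mul _
    have hintC : IntegrableOn F (Set.Ioi 1) :=
      IntegrableOn.congr_fun hIC hEqC.symm measurableSet_Ioi
    have hC : ∫ x in Set.Ioi 1, F x = Real.exp (-(ε / 2)) / 6 := by
      rw [setIntegral_congr_fun measurableSet_Ioi hEqC, integral_const_mul _ _]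
      have : ∫ x in Set.Ioi (1:ℝ), Real.exp (-(3 * ε / 4) * x)
          = Real.exp (-(3 * ε / 4 * 1)) / (3 * ε / 4) := by
        have := int_exp_Ioi' (show (0:ℝ) < 3 * ε / 4 by positivity) 1
        simpa only [neg_mul] using this
      rw [this, show (3 * ε / 4 * 1 : ℝ) = 3 * ε / 4 by ring]
      have hEE : Real.exp (ε / 4) * Real.exp (-(3 * ε / 4)) = Real.exp (-(ε / 2)) := by
        rw [← Real.exp_add]; ring_nf
      have hEEp : Real.exp (ε / 4) * Real.exp (-(3 * ε) / 4) = Real.exp (-ε / 2) := by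
        rw [← Real.exp_add]; ring_nf
      field_simp
      have hEE2 : Real.exp (ε / 4) * Real.exp (-(ε * 3 / 4)) = Real.exp (-(ε / 2)) := by
        rw [← Real.exp_add]; ring_nf
      linear_combination 24 * hEE2
    -- assemble
    have hintBC : IntegrableOn F (Set.Ioi 0) := by
      rw [show Set.Ioi (0:ℝ) = Set.Ioc 0 1 ∪ Set.Ioi 1 from
        (Set.Ioc_union_Ioi_eq_Ioi zero_le_one).symm]
      exact hintB.union hintC
    have hsplit : (∫ x : ℝ, F x) = (∫ x in Set.Iic (0:ℝ), F x) + ((∫ x in Set.Ioc (0:ℝ) 1, F x)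
        + (∫ x in Set.Ioi (1:ℝ), F x)) := by
      rw [← setIntegral_univ (f := F) (μ := volume), ← Set.Iic_union_Ioi (a := (0:ℝ)),
        setIntegral_union (Set.Iic_disjoint_Ioi le_rfl) measurableSet_Ioi hintA hintBC,
        show Set.Ioi (0:ℝ) = Set.Ioc 0 1 ∪ Set.Ioi 1 from
          (Set.Ioc_union_Ioi_eq_Ioi zero_le_one).symm,
        setIntegral_union (Set.Ioc_disjoint_Ioi le_rfl) measurableSet_Ioi hintB hintC]
    rw [hsplit, hA, hB, hC]
    have hu : Real.exp (ε * (1/2)) = Real.exp (ε * (1/4)) * Real.exp (ε * (1/4)) := by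
      rw [← Real.exp_add]; ring_nf
    have hu2 : Real.exp (-(ε / 4)) * Real.exp (ε * (1/4)) = 1 := by
      rw [← Real.exp_add, show -(ε / 4) + ε * (1/4) = 0 by ring, Real.exp_zero]
    have hu3 : Real.exp (-(ε / 2)) * Real.exp (ε * (1/2)) = 1 := by
      rw [← Real.exp_add, show -(ε / 2) + ε * (1/2) = 0 by ring, Real.exp_zero]
    dsimp only
    rw [hu]
    have hu4 : Real.exp (-(ε / 4)) * (Real.exp (ε * (1/4)) * Real.exp (ε * (1/4)))
        = Real.exp (ε * (1/4)) := by rw [← mul_assoc, hu2, one_mul]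
    have hu5 : Real.exp (-(ε / 2)) * (Real.exp (ε * (1/4)) * Real.exp (ε * (1/4))) = 1 := by
      rw [← hu]; exact hu3
    have ha : Real.exp (-ε / 4) * (Real.exp (ε / 4) * Real.exp (ε / 4)) = Real.exp (ε / 4) := by
      rw [← Real.exp_add, ← Real.exp_add, show -ε / 4 + (ε / 4 + ε / 4) = ε / 4 by ring]
    have hb2 : Real.exp (-ε / 2) * (Real.exp (ε / 4) * Real.exp (ε / 4)) = 1 := by
      rw [← Real.exp_add, ← Real.exp_add, show -ε / 2 + (ε / 4 + ε / 4) = 0 by ring,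
        Real.exp_zero]
    have ha' : Real.exp (-(ε / 4)) * (Real.exp (ε / 4) * Real.exp (ε / 4)) = Real.exp (ε / 4) := by
      rw [← Real.exp_add, ← Real.exp_add, show -(ε / 4) + (ε / 4 + ε / 4) = ε / 4 by ring]
    have hb2' : Real.exp (-(ε / 2)) * (Real.exp (ε / 4) * Real.exp (ε / 4)) = 1 := by
      rw [← Real.exp_add, ← Real.exp_add, show -(ε / 2) + (ε / 4 + ε / 4) = 0 by ring,
        Real.exp_zero]
    field_simp
    linear_combination (-(8:ℝ)) * ha' + 2 * hb2'
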